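/- Let a, b, c, d, p, q, r, s be integers satisfying a·p + b·q = 1 + a·b and c·r + d·s = 1 + c·d, and set u = a·c + b·d. Then (a·s + b·(d − r))·(c·(a − q) + d·p) = 1 + u·(p·(d − r) + s·(a − q)); in particular the product (a·s + b·(d − r))·(c·(a − q) + d·p) ≡ 1 (mod u). -/
import Mathlib


theorem product_identity_x1_y1
    (a b c d p q r s : ℤ)
    (hab : a * p + b * q = 1 + a * b)
    (hcd : c * r + d * s = 1 + c * d) :
    (a * s + b * (d - r)) * (c * (a - q) + d * p) =
      1 + (a * c + b * d) * (p * (d - r) + s * (a - q)) ∧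
    (a * s + b * (d - r)) * (c * (a - q) + d * p) ≡ 1 [ZMOD a * c + b * d] := by
  have key : (a * s + b * (d - r)) * (c * (a - q) + d * p) =
      1 + (a * c + b * d) * (p * (d - r) + s * (a - q)) := by
    linear_combination (d * s + c * r - c * d) * hab + hcd
  refine ⟨key, ?_⟩
  rw [key]
  exact (Int.modEq_iff_dvd.mpr ⟨-(p * (d - r) + s * (a - q)), by ring⟩)
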